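/- Let R be a nontrivial commutative ring with identity having more than one nonzero zero-divisor. If the extended zero-divisor graph Γ̃(R) is not complete, then the diameter of the zero-divisor graph Γ(R) equals 3. -/

import Mathlib

/-- The set of zero-divisors of a commutative ring (including `0`). -/
def zdSet (R : Type*) [CommRing R] : Set R :=
  {x : R | ∃ y : R, y ≠ 0 ∧ x * y = 0}

/-- The set of nonzero zero-divisors. -/
def zdStar (R : Type*) [CommRing R] : Set R :=
  {x : R | x ≠ 0 ∧ ∃ y : R, y ≠ 0 ∧ x * y = 0}

/-- The zero-divisor graph `Γ(R)`: vertices are the nonzero zero-divisors, and distinct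
`x`, `y` are adjacent iff `x * y = 0`. -/
def zdGraph (R : Type*) [CommRing R] : SimpleGraph (zdStar R) where
  Adj x y := x.1 ≠ y.1 ∧ x.1 * y.1 = 0
  symm := ⟨fun x y h => ⟨h.1.symm, by rw [mul_comm]; exact h.2⟩⟩
  loopless := ⟨fun x h => h.1 rfl⟩

/-- The extended zero-divisor graph `Γ̃(R)`: vertices are the nonzero zero-divisors, and
distinct `x`, `y` are adjacent iff `x * y = 0` or `x + y ∈ Z(R)`. -/
def zdExtGraph (R : Type*) [CommRing R] : SimpleGraph (zdStar R) where
  Adj x y := x.1 ≠ y.1 ∧ (x.1 * y.1 = 0 ∨ x.1 + y.1 ∈ zdSet R)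
  symm := ⟨fun x y h => ⟨h.1.symm, by rw [mul_comm, add_comm]; exact h.2⟩⟩
  loopless := ⟨fun x h => h.1 rfl⟩

universe u

open SimpleGraph

section aux
variable {R : Type u} [CommRing R]

lemma zd_edist_le_one {u v : zdStar R} (h : (zdGraph R).Adj u v) :
    (zdGraph R).edist u v ≤ 1 := by
  have := SimpleGraph.edist_le (Walk.cons h Walk.nil)
  simpa using this

lemma zd_edist_le_two {u v z : zdStar R} (h1 : (zdGraph R).Adj u z)
    (h2 : (zdGraph R).Adj z v) : (zdGraph R).edist u v ≤ 2 := by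
  have := SimpleGraph.edist_le (Walk.cons h1 (Walk.cons h2 Walk.nil))
  simpa using this

lemma zd_edist_le_three {u v z w : zdStar R} (h1 : (zdGraph R).Adj u z)
    (h2 : (zdGraph R).Adj z w) (h3 : (zdGraph R).Adj w v) :
    (zdGraph R).edist u v ≤ 3 := by
  have := SimpleGraph.edist_le (Walk.cons h1 (Walk.cons h2 (Walk.cons h3 Walk.nil)))
  simpa using this

/-- The case `x² = 0`, `y² ≠ 0`, `xy ≠ 0`. -/
lemma zd_half (u v : zdStar R) (hxy : u.1 * v.1 ≠ 0)
    (hx2 : u.1 * u.1 = 0) (hy2 : v.1 * v.1 ≠ 0) :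
    (zdGraph R).edist u v ≤ 2 := by
  have hx0 : u.1 ≠ 0 := u.2.1
  obtain ⟨b, hb0, hyb⟩ := v.2.2
  have hbmem : b ∈ zdStar R := ⟨hb0, v.1, v.2.1, by linear_combination hyb⟩
  by_cases hxb : u.1 * b = 0
  · -- path x — b — y
    refine zd_edist_le_two (z := ⟨b, hbmem⟩) ⟨?_, hxb⟩ ⟨?_, by linear_combination hyb⟩
    · intro hx
      exact hxy (by linear_combination v.1 * hx + hyb)
    · intro hx
      exact hy2 (by linear_combination hyb - v.1 * hx)
  · -- path x — x*b — y
    have hmem : u.1 * b ∈ zdStar R := ⟨hxb, u.1, hx0, by linear_combination b * hx2⟩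
    refine zd_edist_le_two (z := ⟨u.1 * b, hmem⟩)
      ⟨?_, by linear_combination b * hx2⟩ ⟨?_, by linear_combination u.1 * hyb⟩
    · intro hx
      exact hxy (by linear_combination v.1 * hx + u.1 * hyb)
    · intro hx
      exact hy2 (by linear_combination v.1 * hx.symm + u.1 * hyb)

lemma zd_key (u v : zdStar R) : (zdGraph R).edist u v ≤ 3 := by
  by_cases hne : u = v
  · subst hne; simp
  have hne' : u.1 ≠ v.1 := fun h => hne (Subtype.ext h)
  by_cases hxy : u.1 * v.1 = 0
  · exact le_trans (zd_edist_le_one ⟨hne', hxy⟩) (by norm_num)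
  by_cases hx2 : u.1 * u.1 = 0
  · by_cases hy2 : v.1 * v.1 = 0
    · -- both squares zero: path u — u*v — v
      have hmem : u.1 * v.1 ∈ zdStar R := ⟨hxy, u.1, u.2.1, by linear_combination v.1 * hx2⟩
      refine le_trans (zd_edist_le_two (z := ⟨u.1 * v.1, hmem⟩)
        ⟨?_, by linear_combination v.1 * hx2⟩ ⟨?_, by linear_combination u.1 * hy2⟩)
        (by norm_num)
      · intro hx
        exact hxy (by linear_combination v.1 * hx + u.1 * hy2)
      · intro hx
        exact hxy (by linear_combination u.1 * hx.symm + v.1 * hx2)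
    · exact le_trans (zd_half u v hxy hx2 hy2) (by norm_num)
  · by_cases hy2 : v.1 * v.1 = 0
    · rw [SimpleGraph.edist_comm]
      exact le_trans (zd_half v u (by rwa [mul_comm]) hy2 hx2) (by norm_num)
    -- both squares nonzero
    obtain ⟨a, ha0, hxa⟩ := u.2.2
    obtain ⟨b, hb0, hyb⟩ := v.2.2
    have hamem : a ∈ zdStar R := ⟨ha0, u.1, u.2.1, by linear_combination hxa⟩
    have hbmem : b ∈ zdStar R := ⟨hb0, v.1, v.2.1, by linear_combination hyb⟩
    have hax : u.1 ≠ a := by intro h; exact hx2 (by linear_combination u.1 * h + hxa)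
    have hax' : u.1 ≠ a := hax
    have hay : a ≠ v.1 := by
      intro h; exact hxy (by linear_combination hxa - u.1 * h)
    have hbx : b ≠ u.1 := by
      intro h; exact hxy (by linear_combination hyb - v.1 * h)
    have hby : b ≠ v.1 := by
      intro h; exact hy2 (by linear_combination hyb - v.1 * h)
    by_cases hab : a = b
    · subst hab
      exact le_trans (zd_edist_le_two (z := ⟨a, hamem⟩)
        ⟨hax, by linear_combination hxa⟩ ⟨hay, by linear_combination hyb⟩) (by norm_num)
    by_cases hab0 : a * b = 0
    · exact zd_edist_le_three (z := ⟨a, hamem⟩) (w := ⟨b, hbmem⟩)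
        ⟨hax, by linear_combination hxa⟩ ⟨hab, hab0⟩
        ⟨hby, by linear_combination hyb⟩
    · have hmem : a * b ∈ zdStar R := ⟨hab0, u.1, u.2.1, by linear_combination b * hxa⟩
      refine le_trans (zd_edist_le_two (z := ⟨a * b, hmem⟩)
        ⟨?_, by linear_combination b * hxa⟩ ⟨?_, by linear_combination a * hyb⟩)
        (by norm_num)
      · intro hx
        exact hx2 (by linear_combination u.1 * hx + b * hxa)
      · intro hx
        exact hy2 (by linear_combination v.1 * hx.symm + a * hyb)

end aux

theorem stmt0 (R : Type u) [CommRing R] [Nontrivial R]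
    (hcard : (zdStar R).Nontrivial)
    (hnc : ¬ ∀ x y : zdStar R, x ≠ y → (zdExtGraph R).Adj x y) :
    (zdGraph R).ediam = 3 := by
  push_neg at hnc
  obtain ⟨x, y, hxyne, hnadj⟩ := hnc
  have hne' : x.1 ≠ y.1 := fun h => hxyne (Subtype.ext h)
  have hkey : ¬ (x.1 * y.1 = 0 ∨ x.1 + y.1 ∈ zdSet R) := fun h => hnadj ⟨hne', h⟩
  push_neg at hkey
  obtain ⟨hxy0, hsum⟩ := hkey
  have hle : (zdGraph R).ediam ≤ 3 :=
    SimpleGraph.ediam_le_of_edist_le fun u v => zd_key u v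
  have h3 : (zdGraph R).edist x y ≤ 3 := zd_key x y
  have hnt : (zdGraph R).edist x y ≠ ⊤ := fun h => by simp [h] at h3
  obtain ⟨p, hp⟩ := SimpleGraph.exists_walk_of_edist_ne_top hnt
  have hge : 3 ≤ (zdGraph R).edist x y := by
    by_contra hlt
    push_neg at hlt
    have hplen : p.length ≤ 2 := by
      have : (p.length : ℕ∞) < 3 := hp ▸ hlt
      exact_mod_cast Nat.lt_succ_iff.mp (by exact_mod_cast this)
    clear hp hnt h3
    cases p with
    | nil => exact hne' rfl
    | cons h q =>
      rename_i z
      cases q with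
      | nil => exact hxy0 h.2
      | cons h2 q2 =>
        rename_i w
        simp only [Walk.length_cons] at hplen
        have hq2 : q2.length = 0 := by omega
        have heq := Walk.eq_of_length_eq_zero hq2
        subst heq
        exact hsum ⟨z.1, z.2.1, by linear_combination h.2 + h2.2⟩
  exact le_antisymm hle (le_trans hge SimpleGraph.edist_le_ediam)
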